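/- The series sum over k≥1 of 1/(5^k·(2k-1)(2k)(2k+1)) equals (1/2)ln(4/5) + (3/√5)·ln(α) - 1/2, where α = (1+√5)/2 is the golden ratio. -/

import Mathlib

theorem stmt_12 :
    ∑' k : ℕ, 1 / (5 ^ (k + 1) * (2 * (k : ℝ) + 1) * (2 * k + 2) * (2 * k + 3)) =
      (1 / 2) * Real.log (4 / 5)
        + (3 / Real.sqrt 5) * Real.log ((1 + Real.sqrt 5) / 2) - 1 / 2 := by
  have hs0 : (0:ℝ) < Real.sqrt 5 := Real.sqrt_pos.2 (by norm_num)
  set s : ℝ := Real.sqrt 5 with hsdef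
  have hs : s ^ 2 = 5 := Real.sq_sqrt (by norm_num)
  have hs2 : (2:ℝ) < s := by nlinarith
  set x : ℝ := 1 / s with hxdef
  have hx0 : 0 < x := by positivity
  have hx1 : x < 1 := by
    rw [hxdef, div_lt_one hs0]; nlinarith
  have hxabs : |x| < 1 := by rw [abs_of_pos hx0]; exact hx1
  have hx2 : x ^ 2 = 1 / 5 := by
    rw [hxdef, div_pow, one_pow, hs]
  set L : ℝ := Real.log (1 + x) - Real.log (1 - x) with hLdef
  have hL := Real.hasSum_log_sub_log_of_abs_lt_one hxabs
  -- series A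
  have hA : HasSum (fun k : ℕ => x ^ (2*k+2) / (2*(k:ℝ)+1)) ((x/2) * L) := by
    have := hL.mul_left (x/2)
    convert this using 2 with k
    · rfl
    ring
  -- series C (shifted)
  have hshift : HasSum (fun k : ℕ =>
      (2:ℝ) * (1/(2*((k:ℝ)+1)+1)) * x ^ (2*(k+1)+1)) (L - 2*x) := by
    have h0 : ∑ i ∈ Finset.range 1,
        (2:ℝ) * (1/(2*(i:ℝ)+1)) * x ^ (2*i+1) = 2*x := by
      simp
    have := (hasSum_nat_add_iff' (f := fun k : ℕ =>
      (2:ℝ) * (1/(2*(k:ℝ)+1)) * x ^ (2*k+1)) 1).mpr hL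
    rw [h0] at this
    convert this using 2 with k
    · rfl
    push_cast
    ring_nf
  have hC : HasSum (fun k : ℕ => x ^ (2*k+2) / (2*(k:ℝ)+3)) ((1/(2*x)) * (L - 2*x)) := by
    have := hshift.mul_left (1/(2*x))
    convert this using 2 with k
    · rfl
    have hd : (2*(k:ℝ)+3) ≠ 0 := by positivity
    have hxne : x ≠ 0 := ne_of_gt hx0
    field_simp
    ring
  -- series B
  have hB : HasSum (fun k : ℕ => x ^ (2*k+2) / (2*(k:ℝ)+2))
      ((1/2) * (-Real.log (1 - x^2))) := by
    have habs2 : |x^2| < 1 := by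
      rw [abs_of_pos (by positivity)]; nlinarith
    have := (Real.hasSum_pow_div_log_of_abs_lt_one habs2).mul_left (1/2)
    convert this using 2 with k
    · rfl
    have hd : ((k:ℝ)+1) ≠ 0 := by positivity
    field_simp
    ring
  -- combine
  have htot := ((hA.mul_left (1/2)).sub hB).add (hC.mul_left (1/2))
  have hval := htot.tsum_eq
  have hfun : (fun k : ℕ => (1/2) * (x ^ (2*k+2) / (2*(k:ℝ)+1)) - x ^ (2*k+2) / (2*(k:ℝ)+2)
      + (1/2) * (x ^ (2*k+2) / (2*(k:ℝ)+3)))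
      = fun k : ℕ => 1 / (5 ^ (k + 1) * (2 * (k : ℝ) + 1) * (2 * k + 2) * (2 * k + 3)) := by
    funext k
    have hp : x ^ (2*k+2) = 1 / 5 ^ (k+1) := by
      have : x ^ (2*k+2) = (x^2) ^ (k+1) := by ring
      rw [this, hx2, div_pow, one_pow]
    have h5 : (0:ℝ) < 5 ^ (k+1) := by positivity
    have hd1 : (0:ℝ) < 2*(k:ℝ)+1 := by positivity
    have hd2 : (0:ℝ) < 2*(k:ℝ)+2 := by positivity
    have hd3 : (0:ℝ) < 2*(k:ℝ)+3 := by positivity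
    rw [hp]
    field_simp
    ring
  rw [hfun] at hval
  rw [hval]
  -- now evaluate the closed form
  have h1x : (0:ℝ) < 1 - x := by linarith
  have h1x' : (0:ℝ) < 1 + x := by linarith
  have hlog2 : Real.log (1 - x^2) = Real.log (4/5) := by
    rw [hx2]; norm_num
  have hLval : L = 2 * Real.log ((1 + s) / 2) := by
    have hα : (0:ℝ) < (1 + s) / 2 := by positivity
    have hsq : (1 + x) / (1 - x) = ((1 + s) / 2) ^ 2 := by
      rw [hxdef]
      rw [div_eq_iff (by positivity : (1:ℝ) - 1/s ≠ 0)]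
      field_simp
      nlinarith
    have : L = Real.log ((1 + x) / (1 - x)) := by
      rw [hLdef, Real.log_div (ne_of_gt h1x') (ne_of_gt h1x)]
    rw [this, hsq, Real.log_pow]
    push_cast
    ring
  rw [hlog2, hLval]
  have hxne : x ≠ 0 := ne_of_gt hx0
  have hsne : s ≠ 0 := ne_of_gt hs0
  have hcoef : (1/2) * ((x/2) * (2 * Real.log ((1+s)/2)))
      + (1/2) * ((1/(2*x)) * (2 * Real.log ((1+s)/2) - 2*x))
      = (3 / s) * Real.log ((1+s)/2) - 1/2 := by
    rw [hxdef]
    field_simp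
    linear_combination (Real.log ((1+s)/2)) * hs
  calc (1/2) * ((x/2) * (2 * Real.log ((1+s)/2))) - (1/2) * (-Real.log (4/5))
        + (1/2) * ((1/(2*x)) * (2 * Real.log ((1+s)/2) - 2*x))
      = ((1/2) * ((x/2) * (2 * Real.log ((1+s)/2)))
        + (1/2) * ((1/(2*x)) * (2 * Real.log ((1+s)/2) - 2*x))) + (1/2) * Real.log (4/5) := by
        ring
    _ = (1/2) * Real.log (4/5) + (3 / s) * Real.log ((1+s)/2) - 1/2 := by
        rw [hcoef]; ring
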